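/- Fix a graded system of Hilbert spaces with product ∘, and take the weights w₀ = 1 and w_n = 1/(n−1)! for n ≥ 1. Then for all elements a, b of the algebra, ‖a ∘ b‖_w ≤ √3·‖a‖_w·‖b‖_w. -/

import Mathlib

/-! A graded system of Hilbert spaces: a family `(E n)_{n ≥ 1}` of real inner product spaces
together with bilinear maps `mul p q : E p →ₗ E q →ₗ E (p+q)`.  An element of the associated
algebra is a pair `(a₀, (a n)_{n ≥ 1})` with `a₀ : ℝ`, `a n : E n`, all but finitely many `a n`
zero (the component `a 0` is unused dead data).  -/


lemma normCastEq {E : ℕ → Type*} [∀ n, NormedAddCommGroup (E n)] {m n : ℕ}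
    (h : m = n) (x : E m) : ‖cast (congrArg E h) x‖ = ‖x‖ := by subst h; rfl

lemma castZeroEq {E : ℕ → Type*} [∀ n, NormedAddCommGroup (E n)] {m n : ℕ}
    (h : m = n) : cast (congrArg E h) (0 : E m) = 0 := by subst h; rfl

lemma factConvLe (n : ℕ) :
    ∑ p ∈ Finset.Ioo 0 n, (p - 1).factorial * (n - p - 1).factorial ≤ (n - 1).factorial := by
  rcases Nat.lt_or_ge n 2 with h | h
  · interval_cases n <;> decide
  · calc ∑ p ∈ Finset.Ioo 0 n, (p - 1).factorial * (n - p - 1).factorial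
        ≤ ∑ _p ∈ Finset.Ioo 0 n, (n - 2).factorial := by
          refine Finset.sum_le_sum fun p hp => ?_
          simp only [Finset.mem_Ioo] at hp
          have h1 : p - 1 ≤ n - 2 := by omega
          have h2 : n - 2 - (p - 1) = n - p - 1 := by omega
          have h3 := Nat.factorial_mul_factorial_dvd_factorial h1
          rw [h2] at h3
          exact Nat.le_of_dvd (Nat.factorial_pos _) h3
    _ = (n - 1) * (n - 2).factorial := by
          rw [Finset.sum_const, Nat.card_Ioo, smul_eq_mul]
          congr 1
    _ = (n - 1).factorial := by
          have h4 : n - 1 = (n - 2) + 1 := by omega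
          rw [h4, Nat.factorial_succ]

lemma convCS (n : ℕ) (α β : ℕ → ℝ) (hα : ∀ i, 0 ≤ α i) (hβ : ∀ i, 0 ≤ β i) :
    (1 / ((n - 1).factorial : ℝ)) * (∑ p ∈ Finset.Ioo 0 n, α p * β (n - p)) ^ 2 ≤
      ∑ p ∈ Finset.Ioo 0 n,
        ((1 / ((p - 1).factorial : ℝ)) * α p ^ 2) *
          ((1 / ((n - p - 1).factorial : ℝ)) * β (n - p) ^ 2) := by
  set f : ℕ → ℝ := fun p => Real.sqrt (((p - 1).factorial : ℝ) * ((n - p - 1).factorial : ℝ))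
    with hfdef
  set g : ℕ → ℝ := fun p => α p * β (n - p) / f p with hgdef
  have hfpos : ∀ p, 0 < f p := fun p => Real.sqrt_pos.2 (by positivity)
  have hfg : ∀ p, f p * g p = α p * β (n - p) := fun p => by
    rw [hgdef]; simp only; rw [← mul_div_assoc]; exact mul_div_cancel_left₀ _ (hfpos p).ne'
  have hcs := Finset.sum_mul_sq_le_sq_mul_sq (Finset.Ioo 0 n) f g
  have hsum : (∑ p ∈ Finset.Ioo 0 n, f p * g p) = ∑ p ∈ Finset.Ioo 0 n, α p * β (n - p) :=
    Finset.sum_congr rfl fun p _ => hfg p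
  have hf2 : (∑ p ∈ Finset.Ioo 0 n, f p ^ 2) ≤ ((n - 1).factorial : ℝ) := by
    have h5 : ∀ p, f p ^ 2 = ((p - 1).factorial : ℝ) * ((n - p - 1).factorial : ℝ) := fun p =>
      Real.sq_sqrt (by positivity)
    calc (∑ p ∈ Finset.Ioo 0 n, f p ^ 2)
        = ((∑ p ∈ Finset.Ioo 0 n, (p - 1).factorial * (n - p - 1).factorial : ℕ) : ℝ) := by
          push_cast; exact Finset.sum_congr rfl fun p _ => h5 p
      _ ≤ ((n - 1).factorial : ℝ) := by exact_mod_cast factConvLe n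
  have hg2 : ∀ p, g p ^ 2 =
      ((1 / ((p - 1).factorial : ℝ)) * α p ^ 2) *
        ((1 / ((n - p - 1).factorial : ℝ)) * β (n - p) ^ 2) := by
    intro p
    have h2 : f p ^ 2 = ((p - 1).factorial : ℝ) * ((n - p - 1).factorial : ℝ) :=
      Real.sq_sqrt (by positivity)
    have h0 : ((p - 1).factorial : ℝ) ≠ 0 := by positivity
    have h1 : ((n - p - 1).factorial : ℝ) ≠ 0 := by positivity
    rw [hgdef]
    simp only
    rw [div_pow, h2]
    field_simp
  rw [hsum, Finset.sum_congr rfl fun p _ => hg2 p] at hcs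
  set S := ∑ p ∈ Finset.Ioo 0 n,
        ((1 / ((p - 1).factorial : ℝ)) * α p ^ 2) *
          ((1 / ((n - p - 1).factorial : ℝ)) * β (n - p) ^ 2) with hSdef
  have hS : 0 ≤ S := by
    refine Finset.sum_nonneg fun p _ => ?_
    have := hα p; have := hβ (n - p); positivity
  have hfact : (0:ℝ) < ((n - 1).factorial : ℝ) := by positivity
  calc (1 / ((n - 1).factorial : ℝ)) * (∑ p ∈ Finset.Ioo 0 n, α p * β (n - p)) ^ 2
      ≤ (1 / ((n - 1).factorial : ℝ)) * (((n - 1).factorial : ℝ) * S) := by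
        refine mul_le_mul_of_nonneg_left ?_ (by positivity)
        exact hcs.trans (mul_le_mul_of_nonneg_right hf2 hS)
    _ = S := by field_simp

lemma convDouble (K : ℕ) (F G : ℕ → ℝ) (hF : ∀ i, 0 ≤ F i) (hG : ∀ i, 0 ≤ G i) :
    ∑ n ∈ Finset.Ioo 0 K, ∑ p ∈ Finset.Ioo 0 n, F p * G (n - p) ≤
      (∑ p ∈ Finset.Ioo 0 K, F p) * ∑ q ∈ Finset.Ioo 0 K, G q := by
  have key : ∑ n ∈ Finset.Ioo 0 K, ∑ p ∈ Finset.Ioo 0 n, F p * G (n - p) =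
      ∑ x ∈ (Finset.Ioo 0 K ×ˢ Finset.Ioo 0 K).filter (fun x => x.1 + x.2 < K),
        F x.1 * G x.2 := by
    rw [Finset.sum_sigma']
    refine Finset.sum_nbij' (i := fun x => (x.2, x.1 - x.2))
      (j := fun x => ⟨x.1 + x.2, x.1⟩) ?_ ?_ ?_ ?_ ?_
    · rintro ⟨n, p⟩ h
      simp only [Finset.mem_sigma, Finset.mem_Ioo, Finset.mem_filter, Finset.mem_product] at h ⊢
      omega
    · rintro ⟨p, q⟩ h
      simp only [Finset.mem_sigma, Finset.mem_Ioo, Finset.mem_filter, Finset.mem_product] at h ⊢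
      omega
    · rintro ⟨n, p⟩ h
      simp only [Finset.mem_sigma, Finset.mem_Ioo] at h
      simp only [Sigma.mk.inj_iff]
      constructor
      · omega
      · exact heq_of_eq rfl
    · rintro ⟨p, q⟩ h
      simp only [Finset.mem_filter, Finset.mem_product, Finset.mem_Ioo] at h
      simp only [Prod.mk.injEq]
      exact ⟨trivial, by omega⟩
    · rintro ⟨n, p⟩ _; rfl
  rw [key, Finset.sum_mul_sum]
  calc _ ≤ ∑ x ∈ Finset.Ioo 0 K ×ˢ Finset.Ioo 0 K, F x.1 * G x.2 :=
        Finset.sum_le_sum_of_subset_of_nonneg (Finset.filter_subset _ _)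
          (fun i _ _ => mul_nonneg (hF _) (hG _))
    _ = _ := by rw [Finset.sum_product]


/-- The degree-`n` component (`n ≥ 1`) of the product of the elements `(a₀, a)` and `(b₀, b)`:
`c n = a₀ • b n + b₀ • a n + ∑_{p+q=n, p,q ≥ 1} a p ∘ b q`. -/
noncomputable def gradedMul {E : ℕ → Type*} [∀ n, NormedAddCommGroup (E n)]
    [∀ n, InnerProductSpace ℝ (E n)]
    (mul : ∀ p q : ℕ, E p →ₗ[ℝ] E q →ₗ[ℝ] E (p + q))
    (a₀ : ℝ) (a : ∀ n, E n) (b₀ : ℝ) (b : ∀ n, E n) (n : ℕ) : E n :=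
  a₀ • b n + b₀ • a n +
    ∑ p ∈ Finset.Ioo 0 n,
      if h : p + (n - p) = n then cast (congrArg E h) (mul p (n - p) (a p) (b (n - p))) else 0

/-- The weighted Hilbert norm `‖a‖_w = √(a₀² + ∑_{n ≥ 1} w n · ‖a n‖²)` (the weight `w 0 = 1`
of the scalar component is built in). -/
noncomputable def wnorm {E : ℕ → Type*} [∀ n, NormedAddCommGroup (E n)]
    (w : ℕ → ℝ) (a₀ : ℝ) (a : ∀ n, E n) : ℝ :=
  Real.sqrt (a₀ ^ 2 + ∑' n : ℕ, w (n + 1) * ‖a (n + 1)‖ ^ 2)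

/-- **Corollary 2, first weight family.** With the weights `w 0 = 1`, `w n = 1/(n-1)!` for
`n ≥ 1`, the product of the algebra satisfies `‖a ∘ b‖ ≤ √3·‖a‖·‖b‖`. -/
theorem graded_norm_estimate_inv_factorial_pred
    {E : ℕ → Type*} [∀ n, NormedAddCommGroup (E n)] [∀ n, InnerProductSpace ℝ (E n)]
    (mul : ∀ p q : ℕ, E p →ₗ[ℝ] E q →ₗ[ℝ] E (p + q))
    (hmul : ∀ p q : ℕ, 1 ≤ p → 1 ≤ q → ∀ (x : E p) (y : E q), ‖mul p q x y‖ ≤ ‖x‖ * ‖y‖)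
    (a₀ : ℝ) (a : ∀ n, E n) (ha : ∃ N, ∀ n, N ≤ n → a n = 0)
    (b₀ : ℝ) (b : ∀ n, E n) (hb : ∃ N, ∀ n, N ≤ n → b n = 0) :
    wnorm (fun n => 1 / ((n - 1).factorial : ℝ)) (a₀ * b₀) (gradedMul mul a₀ a b₀ b) ≤
      Real.sqrt 3 * wnorm (fun n => 1 / ((n - 1).factorial : ℝ)) a₀ a *
        wnorm (fun n => 1 / ((n - 1).factorial : ℝ)) b₀ b := by
  classical
  obtain ⟨Na, hNa⟩ := ha
  obtain ⟨Nb, hNb⟩ := hb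
  set M : ℕ := 2 * max Na Nb + 2 with hM
  set c : ∀ n, E n := gradedMul mul a₀ a b₀ b with hc
  have hcz : ∀ n, M ≤ n → c n = 0 := by
    intro n hn
    have han : a n = 0 := hNa n (by omega)
    have hbn : b n = 0 := hNb n (by omega)
    show gradedMul mul a₀ a b₀ b n = 0
    unfold gradedMul
    rw [han, hbn, smul_zero, smul_zero, zero_add, zero_add]
    refine Finset.sum_eq_zero fun p hp => ?_
    simp only [Finset.mem_Ioo] at hp
    have hpq : p + (n - p) = n := by omega
    rw [dif_pos hpq]
    rcases Nat.lt_or_ge p Na with h1 | h1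
    · have hb0 : b (n - p) = 0 := hNb _ (by omega)
      rw [hb0, map_zero]; exact castZeroEq hpq
    · have ha0 : a p = 0 := hNa _ h1
      rw [ha0, map_zero, LinearMap.zero_apply]; exact castZeroEq hpq
  have hfin : ∀ (x : ∀ n, E n), (∀ n, M ≤ n → x n = 0) →
      (∑' n : ℕ, 1 / (((n + 1) - 1).factorial : ℝ) * ‖x (n + 1)‖ ^ 2) =
        ∑ n ∈ Finset.Ioo 0 (M + 1), 1 / ((n - 1).factorial : ℝ) * ‖x n‖ ^ 2 := by
    intro x hx
    rw [tsum_eq_sum (s := Finset.range M) (f := fun n =>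
        1 / (((n + 1) - 1).factorial : ℝ) * ‖x (n + 1)‖ ^ 2) (by
      intro n hn
      simp only [Finset.mem_range, not_lt] at hn
      have hz : x (n + 1) = 0 := hx (n + 1) (by omega)
      simp [hz])]
    rw [← Finset.Ico_add_one_left_eq_Ioo, Finset.sum_Ico_eq_sum_range]
    refine Finset.sum_congr (by norm_num) fun i _ => ?_
    rw [Nat.zero_add, Nat.add_comm 1 i]
  simp only [wnorm]
  rw [hfin a (fun n hn => hNa n (by omega)), hfin b (fun n hn => hNb n (by omega)),
    hfin c hcz]
  set A := ∑ n ∈ Finset.Ioo 0 (M + 1), 1 / ((n - 1).factorial : ℝ) * ‖a n‖ ^ 2 with hA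
  set B := ∑ n ∈ Finset.Ioo 0 (M + 1), 1 / ((n - 1).factorial : ℝ) * ‖b n‖ ^ 2 with hB
  have hA0 : 0 ≤ A := Finset.sum_nonneg fun n _ => by positivity
  have hB0 : 0 ≤ B := Finset.sum_nonneg fun n _ => by positivity
  -- pointwise estimate
  have hCn : ∀ n ∈ Finset.Ioo 0 (M + 1), 1 / ((n - 1).factorial : ℝ) * ‖c n‖ ^ 2 ≤
      3 * (a₀ ^ 2 * (1 / ((n - 1).factorial : ℝ) * ‖b n‖ ^ 2) +
        b₀ ^ 2 * (1 / ((n - 1).factorial : ℝ) * ‖a n‖ ^ 2) +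
        ∑ p ∈ Finset.Ioo 0 n, (1 / ((p - 1).factorial : ℝ) * ‖a p‖ ^ 2) *
          (1 / ((n - p - 1).factorial : ℝ) * ‖b (n - p)‖ ^ 2)) := by
    intro n hn
    have hnorm : ‖c n‖ ≤ |a₀| * ‖b n‖ + |b₀| * ‖a n‖ +
        ∑ p ∈ Finset.Ioo 0 n, ‖a p‖ * ‖b (n - p)‖ := by
      have hceq : c n = a₀ • b n + b₀ • a n +
          ∑ p ∈ Finset.Ioo 0 n, (if h : p + (n - p) = n then
            cast (congrArg E h) (mul p (n - p) (a p) (b (n - p))) else 0) := rfl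
      rw [hceq]
      refine (norm_add_le _ _).trans (add_le_add ((norm_add_le _ _).trans ?_) ?_)
      · rw [norm_smul, norm_smul, Real.norm_eq_abs, Real.norm_eq_abs]
      · refine (norm_sum_le _ _).trans (Finset.sum_le_sum fun p hp => ?_)
        simp only [Finset.mem_Ioo] at hp
        have hpq : p + (n - p) = n := by omega
        rw [dif_pos hpq, normCastEq hpq]
        exact hmul p (n - p) hp.1 (by omega) _ _
    have hZ0 : 0 ≤ ∑ p ∈ Finset.Ioo 0 n, ‖a p‖ * ‖b (n - p)‖ :=
      Finset.sum_nonneg fun p _ => mul_nonneg (norm_nonneg _) (norm_nonneg _)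
    have hsq : ‖c n‖ ^ 2 ≤ 3 * ((|a₀| * ‖b n‖) ^ 2 + (|b₀| * ‖a n‖) ^ 2 +
        (∑ p ∈ Finset.Ioo 0 n, ‖a p‖ * ‖b (n - p)‖) ^ 2) := by
      have h1 : ‖c n‖ ^ 2 ≤ (|a₀| * ‖b n‖ + |b₀| * ‖a n‖ +
          ∑ p ∈ Finset.Ioo 0 n, ‖a p‖ * ‖b (n - p)‖) ^ 2 :=
        pow_le_pow_left₀ (norm_nonneg _) hnorm 2
      nlinarith [sq_nonneg (|a₀| * ‖b n‖ - |b₀| * ‖a n‖),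
        sq_nonneg (|a₀| * ‖b n‖ - ∑ p ∈ Finset.Ioo 0 n, ‖a p‖ * ‖b (n - p)‖),
        sq_nonneg (|b₀| * ‖a n‖ - ∑ p ∈ Finset.Ioo 0 n, ‖a p‖ * ‖b (n - p)‖)]
    have hw0 : (0:ℝ) < 1 / ((n - 1).factorial : ℝ) := by positivity
    have hCS := convCS n (fun p => ‖a p‖) (fun p => ‖b p‖)
      (fun _ => norm_nonneg _) (fun _ => norm_nonneg _)
    calc 1 / ((n - 1).factorial : ℝ) * ‖c n‖ ^ 2
        ≤ 1 / ((n - 1).factorial : ℝ) * (3 * ((|a₀| * ‖b n‖) ^ 2 + (|b₀| * ‖a n‖) ^ 2 +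
            (∑ p ∈ Finset.Ioo 0 n, ‖a p‖ * ‖b (n - p)‖) ^ 2)) :=
          mul_le_mul_of_nonneg_left hsq hw0.le
      _ = 3 * (a₀ ^ 2 * (1 / ((n - 1).factorial : ℝ) * ‖b n‖ ^ 2) +
            b₀ ^ 2 * (1 / ((n - 1).factorial : ℝ) * ‖a n‖ ^ 2) +
            1 / ((n - 1).factorial : ℝ) *
              (∑ p ∈ Finset.Ioo 0 n, ‖a p‖ * ‖b (n - p)‖) ^ 2) := by
          rw [mul_pow, mul_pow, sq_abs, sq_abs]; ring
      _ ≤ _ := by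
          refine mul_le_mul_of_nonneg_left ?_ (by norm_num)
          exact add_le_add le_rfl hCS
  -- sum up
  have hC : (∑ n ∈ Finset.Ioo 0 (M + 1), 1 / ((n - 1).factorial : ℝ) * ‖c n‖ ^ 2)
      ≤ 3 * (a₀ ^ 2 * B + b₀ ^ 2 * A + A * B) := by
    have hD := convDouble (M + 1) (fun p => 1 / ((p - 1).factorial : ℝ) * ‖a p‖ ^ 2)
      (fun q => 1 / ((q - 1).factorial : ℝ) * ‖b q‖ ^ 2)
      (fun i => by positivity) (fun i => by positivity)
    calc (∑ n ∈ Finset.Ioo 0 (M + 1), 1 / ((n - 1).factorial : ℝ) * ‖c n‖ ^ 2)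
        ≤ ∑ n ∈ Finset.Ioo 0 (M + 1),
            3 * (a₀ ^ 2 * (1 / ((n - 1).factorial : ℝ) * ‖b n‖ ^ 2) +
              b₀ ^ 2 * (1 / ((n - 1).factorial : ℝ) * ‖a n‖ ^ 2) +
              ∑ p ∈ Finset.Ioo 0 n, (1 / ((p - 1).factorial : ℝ) * ‖a p‖ ^ 2) *
                (1 / ((n - p - 1).factorial : ℝ) * ‖b (n - p)‖ ^ 2)) :=
          Finset.sum_le_sum hCn
      _ = 3 * (a₀ ^ 2 * B + b₀ ^ 2 * A +
            ∑ n ∈ Finset.Ioo 0 (M + 1), ∑ p ∈ Finset.Ioo 0 n,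
              (1 / ((p - 1).factorial : ℝ) * ‖a p‖ ^ 2) *
                (1 / ((n - p - 1).factorial : ℝ) * ‖b (n - p)‖ ^ 2)) := by
          rw [← Finset.mul_sum, Finset.sum_add_distrib, Finset.sum_add_distrib,
            ← Finset.mul_sum, ← Finset.mul_sum, hA, hB]
      _ ≤ 3 * (a₀ ^ 2 * B + b₀ ^ 2 * A + A * B) := by
          refine mul_le_mul_of_nonneg_left (add_le_add le_rfl ?_) (by norm_num)
          exact hD
  -- final sqrt manipulation
  have h3 : (0:ℝ) ≤ 3 := by norm_num
  rw [show Real.sqrt 3 * Real.sqrt (a₀ ^ 2 + A) * Real.sqrt (b₀ ^ 2 + B) =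
      Real.sqrt (3 * (a₀ ^ 2 + A) * (b₀ ^ 2 + B)) by
    rw [Real.sqrt_mul (by positivity), Real.sqrt_mul h3]]
  refine Real.sqrt_le_sqrt ?_
  nlinarith [sq_nonneg (a₀ * b₀), sq_nonneg a₀, sq_nonneg b₀, mul_nonneg hA0 hB0,
    mul_nonneg (sq_nonneg a₀) hB0, mul_nonneg (sq_nonneg b₀) hA0]
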